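/- Suppose the shifted infinite-horizon optimal value function V̂_∞ satisfies: (a) V̂_∞(X^s) = 0 at the turnpike state X^s; (b) approximate continuity: there exist ε > 0 and γ ∈ 𝒦_∞ such that d(X, X^s) < ε implies |V̂_∞(X) − V̂_∞(X^s)| ≤ γ(d(X, X^s)); and (c) the turnpike property: for every initial state X there exists θ ∈ ℒ (continuous, strictly decreasing to 0) such that for each N and each L ∈ ℕ there exists a set Q(X,L,N) ⊆ {0,…,N} of at most L elements with d(X*_N(k,X), X^s) ≤ θ(L) for all k ∈ {0,…,N} \ Q(X,L,N), where X*_N is the horizon-N optimal trajectory. Then for every X, |V̂_∞(X)| < ∞. -/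

import Mathlib

open Filter

/-- Lemma 1: under optimal operation, the turnpike property and approximate continuity of
the shifted infinite-horizon value function `V̂_∞` at the turnpike `X^s`, `|V̂_∞(X)| < ∞`
for every state `X`. -/
theorem shifted_value_finite {S : Type*} [MetricSpace S]
    (Vinf : S → EReal)        -- shifted infinite-horizon value function `V̂_∞`
    (Xs : S)                  -- turnpike state `X^s`
    (hXs : Vinf Xs = 0)       -- (a) `V̂_∞(X^s) = 0`
    (hop : ∀ X, 0 ≤ Vinf X)   -- optimal operation at the stationary pair
    -- (b) approximate continuity at `X^s` with a `𝒦_∞` function `γ`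
    (ε : ℝ) (hε : 0 < ε)
    (γ : ℝ → ℝ) (hγ0 : γ 0 = 0) (hγmono : StrictMonoOn γ (Set.Ici 0))
    (hγcont : Continuous γ) (hγtop : Tendsto γ atTop atTop)
    (hcont : ∀ X, dist X Xs < ε →
      -(((γ (dist X Xs) : ℝ)) : EReal) ≤ Vinf X - Vinf Xs ∧
        Vinf X - Vinf Xs ≤ ((γ (dist X Xs) : ℝ) : EReal))
    -- horizon-`N` optimal trajectories `X*_N(·, X)` with finite shifted partial costs `Ĵ_M`
    (XN : S → ℕ → ℕ → S) (hinit : ∀ X N, XN X N 0 = X)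
    (J : S → ℕ → ℕ → ℝ)
    -- dynamic programming / suboptimality: `V̂_∞(X) ≤ Ĵ_M(X, U*_N) + V̂_∞(X*_N(M, X))`
    (hDPP : ∀ X N M, M ≤ N → Vinf X ≤ ((J X N M : ℝ) : EReal) + Vinf (XN X N M))
    -- (c) turnpike property with `θ ∈ ℒ` and exceptional sets `Q(X, L, N)` of at most `L` elements
    (θ : S → ℕ → ℝ)
    (hθ : ∀ X, Antitone (θ X) ∧ Tendsto (θ X) atTop (nhds 0) ∧ ∀ L, 0 ≤ θ X L)
    (Q : S → ℕ → ℕ → Finset ℕ)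
    (hQsub : ∀ X L N, Q X L N ⊆ Finset.range (N + 1))
    (hQcard : ∀ X L N, (Q X L N).card ≤ L)
    (hturn : ∀ X L N k, k ≤ N → k ∉ Q X L N → dist (XN X N k) Xs ≤ θ X L) :
    ∀ X, Vinf X ≠ ⊤ ∧ Vinf X ≠ ⊥ := by
  intro X
  constructor
  · -- Vinf X ≠ ⊤
    obtain ⟨hanti, htend, hpos⟩ := hθ X
    obtain ⟨L, hL⟩ : ∃ L, θ X L < ε := (htend.eventually (gt_mem_nhds hε)).exists
    have hcard : (Q X L L).card < (Finset.range (L + 1)).card := by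
      simpa using lt_of_le_of_lt (hQcard X L L) (Nat.lt_succ_self L)
    obtain ⟨k, hk, hkQ⟩ := Finset.exists_of_ssubset
      ((hQsub X L L).ssubset_of_ne (fun h => by rw [h] at hcard; exact lt_irrefl _ hcard))
    have hkle : k ≤ L := Nat.lt_succ_iff.mp (Finset.mem_range.mp hk)
    have hd : dist (XN X L k) Xs ≤ θ X L := hturn X L L k hkle hkQ
    have hdε : dist (XN X L k) Xs < ε := lt_of_le_of_lt hd hL
    have hub : Vinf (XN X L k) ≤ ((γ (dist (XN X L k) Xs) : ℝ) : EReal) := by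
      have := (hcont (XN X L k) hdε).2
      rwa [hXs, sub_zero] at this
    have hDP := hDPP X L k hkle
    have hle : Vinf X ≤ ((J X L k : ℝ) : EReal) + ((γ (dist (XN X L k) Xs) : ℝ) : EReal) :=
      le_trans hDP (add_le_add (le_refl _) hub)
    have : Vinf X ≤ ((J X L k + γ (dist (XN X L k) Xs) : ℝ) : EReal) := by
      rw [EReal.coe_add]; exact hle
    exact ne_top_of_le_ne_top (EReal.coe_ne_top _) this
  · -- Vinf X ≠ ⊥
    intro h
    have := hop X
    rw [h] at this
    exact absurd this (by simp)
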